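/- Uniform coercivity of the regularized entropy (Lemma A.1): for every β > 0 there exists a constant C_β ≥ 0, depending only on β, such that for all λ ∈ [0,1) and all c ∈ ℝ, ((1 − λ)/2)·(c − 1/2)² + H_λ(c) + H_λ(1 − c) ≥ β·|c − 1/2| − C_β. -/

import Mathlib

/-- The regularized entropy `H_λ` (for `λ ∈ [0,1)`). -/
noncomputable def Hlam (lam c : ℝ) : ℝ :=
  if c ≤ (1 - lam) / 2 then c * Real.log ((1 - lam) / (1 + lam)) + lam
  else if c ≤ (1 + lam) / 2 then c * Real.log (2 * c / (1 + lam)) - c + (1 + lam) / 2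
  else 0

lemma Hlam_nonneg {lam : ℝ} (h0 : 0 ≤ lam) (h1 : lam < 1) (c : ℝ) : 0 ≤ Hlam lam c := by
  have hlp : (0:ℝ) < 1 + lam := by linarith
  have hlm : (0:ℝ) < 1 - lam := by linarith
  have hu : (0:ℝ) < (1 - lam) / (1 + lam) := by positivity
  unfold Hlam
  split_ifs with hc1 hc2
  · -- c ≤ (1-lam)/2
    have hL : Real.log ((1 - lam) / (1 + lam)) ≤ 0 := by
      apply Real.log_nonpos (le_of_lt hu)
      rw [div_le_one hlp]; linarith
    rcases le_or_gt c 0 with hc0 | hc0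
    · nlinarith [mul_nonneg (neg_nonneg.mpr hc0) (neg_nonneg.mpr hL)]
    · have hlog : -(2 * lam) / (1 - lam) ≤ Real.log ((1 - lam) / (1 + lam)) := by
        have h := Real.log_le_sub_one_of_pos (x := ((1 - lam) / (1 + lam))⁻¹) (by positivity)
        rw [Real.log_inv] at h
        have hinv : ((1 - lam) / (1 + lam))⁻¹ = (1 + lam) / (1 - lam) := by
          rw [inv_div]
        rw [hinv] at h
        have : (1 + lam) / (1 - lam) - 1 = 2 * lam / (1 - lam) := by
          field_simp; ring
        rw [this] at h
        rw [neg_div]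
        linarith
      have hmul : (1 - lam) / 2 * Real.log ((1 - lam) / (1 + lam)) ≤
          c * Real.log ((1 - lam) / (1 + lam)) :=
        mul_le_mul_of_nonpos_right hc1 hL
      have hmul2 : (1 - lam) / 2 * (-(2 * lam) / (1 - lam)) ≤
          (1 - lam) / 2 * Real.log ((1 - lam) / (1 + lam)) :=
        mul_le_mul_of_nonneg_left hlog (by positivity)
      have heq : (1 - lam) / 2 * (-(2 * lam) / (1 - lam)) = -lam := by
        field_simp
      linarith
  · -- middle branch
    have hc0 : (0:ℝ) < c := lt_of_lt_of_le (by linarith [lt_of_not_ge hc1]) (le_refl c)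
    have hc0' : (0:ℝ) < c := by
      have := lt_of_not_ge hc1; linarith
    have hlog : 1 - (2 * c / (1 + lam))⁻¹ ≤ Real.log (2 * c / (1 + lam)) := by
      have h := Real.log_le_sub_one_of_pos (x := (2 * c / (1 + lam))⁻¹) (by positivity)
      rw [Real.log_inv] at h
      linarith
    have hinv : (2 * c / (1 + lam))⁻¹ = (1 + lam) / (2 * c) := by rw [inv_div]
    rw [hinv] at hlog
    have hmul : c * (1 - (1 + lam) / (2 * c)) ≤ c * Real.log (2 * c / (1 + lam)) :=
      mul_le_mul_of_nonneg_left hlog (le_of_lt hc0')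
    have heq : c * (1 - (1 + lam) / (2 * c)) = c - (1 + lam) / 2 := by
      field_simp
    linarith
  · exact le_refl 0

/-- Uniform coercivity of the regularized entropy (Lemma A.1). -/
theorem regularized_entropy_coercivity (β : ℝ) (hβ : 0 < β) :
    ∃ Cβ : ℝ, 0 ≤ Cβ ∧ ∀ lam ∈ Set.Ico (0:ℝ) 1, ∀ c : ℝ,
      β * |c - 1/2| - Cβ
        ≤ (1 - lam) / 2 * (c - 1/2) ^ 2 + Hlam lam c + Hlam lam (1 - c) := by
  refine ⟨β / 2 + β ^ 2 * Real.exp β / 2, by positivity, ?_⟩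
  have key : ∀ lam ∈ Set.Ico (0:ℝ) 1, ∀ c : ℝ, c ≤ 1/2 →
      β * |c - 1/2| - (β / 2 + β ^ 2 * Real.exp β / 2)
        ≤ (1 - lam) / 2 * (c - 1/2) ^ 2 + Hlam lam c + Hlam lam (1 - c) := by
    rintro lam ⟨h0, h1⟩ c hc
    have hlp : (0:ℝ) < 1 + lam := by linarith
    have hlm : (0:ℝ) < 1 - lam := by linarith
    have habs : |c - 1/2| = 1/2 - c := by
      rw [abs_of_nonpos (by linarith)]; ring
    have hH1 : 0 ≤ Hlam lam c := Hlam_nonneg h0 h1 c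
    have hH2 : 0 ≤ Hlam lam (1 - c) := Hlam_nonneg h0 h1 (1 - c)
    rcases le_or_gt (Real.exp (-β)) (1 - lam) with hcase | hcase
    · -- quadratic term dominates
      have hq : Real.exp (-β) / 2 * (c - 1/2) ^ 2 ≤ (1 - lam) / 2 * (c - 1/2) ^ 2 := by
        apply mul_le_mul_of_nonneg_right _ (sq_nonneg _)
        linarith
      have hee : Real.exp (-β) * Real.exp β = 1 := by
        rw [← Real.exp_add]; simp
      have hepos : 0 < Real.exp (-β) := Real.exp_pos _
      have hepos' : 0 < Real.exp β := Real.exp_pos _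
      rw [habs]
      nlinarith [sq_nonneg (Real.exp (-β) * (1/2 - c) - β), sq_nonneg (1/2 - c)]
    · -- lam close to 1
      rcases le_or_gt c 0 with hc0 | hc0
      · have hcb : c ≤ (1 - lam) / 2 := by linarith
        have hHc : Hlam lam c = c * Real.log ((1 - lam) / (1 + lam)) + lam := by
          unfold Hlam; rw [if_pos hcb]
        have hlog : Real.log ((1 - lam) / (1 + lam)) ≤ -β := by
          have h1' : Real.log ((1 - lam) / (1 + lam)) ≤ Real.log (1 - lam) := by
            apply Real.log_le_log (by positivity)
            rw [div_le_iff₀ hlp]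
            nlinarith
          have h2' : Real.log (1 - lam) ≤ -β := by
            calc Real.log (1 - lam) ≤ Real.log (Real.exp (-β)) :=
              Real.log_le_log hlm (le_of_lt hcase)
            _ = -β := Real.log_exp _
          linarith
        have hmul : c * (-β) ≤ c * Real.log ((1 - lam) / (1 + lam)) :=
          mul_le_mul_of_nonpos_left hlog hc0
        have hquad : 0 ≤ (1 - lam) / 2 * (c - 1/2) ^ 2 := by positivity
        have hCb : 0 ≤ β ^ 2 * Real.exp β / 2 := by positivity
        rw [habs, hHc]
        nlinarith
      · have hquad : 0 ≤ (1 - lam) / 2 * (c - 1/2) ^ 2 := by positivity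
        have hCb : 0 ≤ β ^ 2 * Real.exp β / 2 := by positivity
        rw [habs]
        nlinarith
  intro lam hlam c
  rcases le_or_gt c (1/2) with hc | hc
  · exact key lam hlam c hc
  · have h := key lam hlam (1 - c) (by linarith)
    have e1 : |1 - c - 1/2| = |c - 1/2| := by
      rw [abs_sub_comm c (1/2)]; congr 1; ring
    have e2 : (1 - c - 1/2) ^ 2 = (c - 1/2) ^ 2 := by ring
    have e3 : (1 : ℝ) - (1 - c) = c := by ring
    rw [e1, e2, e3] at h
    linarith
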